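/- arXiv:2504.19495 — 2 statements merged into one kernel-verified Lean document; each statement's English description precedes it below -/
import Mathlib

section
/- Let B be a finite multiset of operations, s a state, and c ∈ B an operation. If c labels every edge of a spanning connected subgraph of the indistinguishability graph G(B,s) (i.e., c is 'labeling': the graph is connected under edges that are c-indistinguishable), then for every permutation x of B, the response of c in x from s equals τ(s,c).val, the response that c would obtain when applied first from s. -/
universe u v w

variable {Q : Type u} {C : Type v} {V : Type w}

/-- The state reached after applying a sequence of operations via transition `τ`. -/
def runState (τ : Q → C → Q × V) : Q → List C → Q
  | s, [] => s
  | s, c :: t => runState τ (τ s c).1 t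

/-- The prefix of `x` strictly before the first occurrence of `c`. -/
def prefixTo [DecidableEq C] (c : C) (x : List C) : List C :=
  x.takeWhile (fun a => decide (a ≠ c))

/-- The response of (the first occurrence of) `c` in the permutation `x` applied from `s`. -/
def respOf (τ : Q → C → Q × V) [DecidableEq C] (s : Q) (c : C) (x : List C) : V :=
  (τ (runState τ s (prefixTo c x)) c).2

/-- The state reached immediately after (the first occurrence of) `c` in `x` from `s`. -/
def stateAfter (τ : Q → C → Q × V) [DecidableEq C] (s : Q) (c : C) (x : List C) : Q :=
  (τ (runState τ s (prefixTo c x)) c).1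

/-- Permutations `x` and `y` are indistinguishable from `s` for operation `c`. -/
def Indist (τ : Q → C → Q × V) [DecidableEq C] (s : Q) (c : C) (x y : List C) : Prop :=
  respOf τ s c x = respOf τ s c y ∧ stateAfter τ s c x = stateAfter τ s c y


theorem labeling_resp_eq [DecidableEq C] (τ : Q → C → Q × V) (s : Q)
    (l : List C) (c : C) (hc : c ∈ l)
    (hlab : ∀ x y : List C, x.Perm l → y.Perm l →
      Relation.ReflTransGen (fun a b => a.Perm l ∧ b.Perm l ∧ Indist τ s c a b) x y) :
    ∀ x : List C, x.Perm l → respOf τ s c x = (τ s c).2 := by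
  intro x hx
  have hy : (c :: l.erase c).Perm l := (List.perm_cons_erase hc).symm
  have hchain := hlab x (c :: l.erase c) hx hy
  have hresp : respOf τ s c (c :: l.erase c) = (τ s c).2 := by
    simp [respOf, prefixTo, runState]
  rw [← hresp]
  refine Relation.ReflTransGen.trans_induction_on hchain (fun _ => rfl)
    (fun h => h.2.2.1) (fun _ _ h1 h2 => h1.trans h2)
end

section
/- If every pair of distinct operations in a finite multiset B strongly commutes from every reachable state (meaning: for all reachable states t and all c ≠ d in B, t.c.d = t.d.c, the response of c from t equals the response of c from t.d, and the response of d from t equals the response of d from t.c), then for every operation c ∈ B and every permutation x of B, the response of c in x from s equals τ(s, c).val, and all permutations of B yield the same final state from s. -/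
universe u v w

variable {Q : Type u} {C : Type v} {V : Type w}

theorem runState_append (τ : Q → C → Q × V) (s : Q) (x y : List C) :
    runState τ s (x ++ y) = runState τ (runState τ s x) y := by
  induction x generalizing s with
  | nil => rfl
  | cons a t ih => simp [runState, ih]

theorem strongly_commuting_conflict_free [DecidableEq C]
    (τ : Q → C → Q × V) (s : Q) (l : List C)
    (h : ∀ σ : List C, σ.Subperm l → ∀ c ∈ l, ∀ d ∈ l, c ≠ d →
      runState τ (runState τ s σ) [c, d] = runState τ (runState τ s σ) [d, c] ∧
      (τ (runState τ s σ) c).2 = (τ (τ (runState τ s σ) d).1 c).2 ∧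
      (τ (runState τ s σ) d).2 = (τ (τ (runState τ s σ) c).1 d).2) :
    (∀ c ∈ l, ∀ x : List C, x.Perm l → respOf τ s c x = (τ s c).2) ∧
    (∀ x x' : List C, x.Perm l → x'.Perm l → runState τ s x = runState τ s x') := by
  have happ := runState_append τ
  -- first part: response invariance
  have resp : ∀ σ : List C, σ.Subperm l → ∀ c ∈ l, (∀ a ∈ σ, a ≠ c) →
      (τ (runState τ s σ) c).2 = (τ s c).2 := by
    intro σ
    induction σ using List.reverseRecOn with
    | nil => intro _ c _ _; rfl
    | append_singleton σ' d ih =>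
      intro hsub c hc hne
      have hσ' : σ'.Subperm l := (List.sublist_append_left σ' [d]).subperm.trans hsub
      have hd : d ∈ l := hsub.subset (by simp)
      have hcd : c ≠ d := fun e => hne d (by simp) (by rw [e])
      have := (h σ' hσ' c hc d hd hcd).2.1
      rw [happ, ] <;> simp [runState] at *
      rw [← this]
      exact ih hσ' c hc (fun a ha => hne a (by simp [ha]))
  -- permutation invariance of final state
  have permrun : ∀ x y : List C, x.Perm y → ∀ σ : List C, (σ ++ x).Subperm l →
      runState τ (runState τ s σ) x = runState τ (runState τ s σ) y := by
    intro x y hp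
    induction hp with
    | nil => intro σ _; rfl
    | cons a hp ih =>
      intro σ hsub
      show runState τ (τ (runState τ s σ) a).1 _ = runState τ (τ (runState τ s σ) a).1 _
      have e : (τ (runState τ s σ) a).1 = runState τ s (σ ++ [a]) := by
        rw [happ]; rfl
      rw [e]
      apply ih
      simpa using hsub
    | swap a b x₁ =>
      intro σ hsub
      by_cases hab : a = b
      · subst hab; rfl
      · have hσ : σ.Subperm l := (List.sublist_append_left σ _).subperm.trans hsub
        have ha : a ∈ l := hsub.subset (by simp)
        have hb : b ∈ l := hsub.subset (by simp)
        have := (h σ hσ a ha b hb hab).1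
        show runState τ (runState τ (runState τ s σ) [b, a]) x₁ =
             runState τ (runState τ (runState τ s σ) [a, b]) x₁
        rw [this]
    | trans h1 h2 ih1 ih2 =>
      intro σ hsub
      refine (ih1 σ hsub).trans (ih2 σ ?_)
      exact ((h1.symm).append_left σ).subperm.trans hsub
  constructor
  · intro c hc x hx
    have hcx : c ∈ x := hx.mem_iff.mpr hc
    have hpre : (prefixTo c x).Subperm l :=
      (List.takeWhile_sublist _).subperm.trans hx.subperm
    have hall : ∀ a ∈ prefixTo c x, a ≠ c := by
      intro a ha
      have := List.mem_takeWhile_imp ha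
      simpa using this
    exact resp (prefixTo c x) hpre c hc hall
  · intro x x' hx hx'
    have := permrun x x' (hx.trans hx'.symm) [] (by simpa using hx.subperm)
    simpa [runState] using this
end
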